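/- Let λ, r₂, z_ε > 0 and t₁ < t₂, and let z, v : ℝ → ℝ be differentiable functions such that on [t₁, t₂]: z(t) ≥ z_ε, |z'(t)| ≤ r₂, and v'(t) ≥ λ·(z(t)² − z_ε²); suppose moreover z(t₁) = z(t₂) = z_ε and (r₂/λ)·(v(t₂) − v(t₁)) ≤ 2·z_ε³. Then for every t ∈ [t₁, t₂] one has z(t)³/3 − z_ε²·z(t) + 2·z_ε³/3 ≤ z_ε³, and hence z(t) ≤ C·z_ε, where C = 2·cos(π/9) is the positive root of ζ³ − 3ζ − 1 = 0. -/

import Mathlib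

set_option maxHeartbeats 1000000


/-- The excursion estimate: if on `[t₁, t₂]` one has `z ≥ z_ε`, `|z'| ≤ r₂` and
`v' ≥ λ(z² − z_ε²)`, with `z(t₁) = z(t₂) = z_ε` and `(r₂/λ)(v(t₂) − v(t₁)) ≤ 2z_ε³`,
then `z(t)³/3 − z_ε²·z(t) + 2z_ε³/3 ≤ z_ε³` on `[t₁, t₂]`, whence
`z(t) ≤ C·z_ε` with `C = 2cos(π/9)` the positive root of `ζ³ − 3ζ − 1 = 0`. -/
theorem excursion_estimate (lam r₂ zε : ℝ) (hlam : 0 < lam) (hr₂ : 0 < r₂) (hzε : 0 < zε)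
    (t₁ t₂ : ℝ) (h12 : t₁ < t₂)
    (z v : ℝ → ℝ) (hz : Differentiable ℝ z) (hv : Differentiable ℝ v)
    (hzge : ∀ t ∈ Set.Icc t₁ t₂, zε ≤ z t)
    (hz' : ∀ t ∈ Set.Icc t₁ t₂, |deriv z t| ≤ r₂)
    (hv' : ∀ t ∈ Set.Icc t₁ t₂, lam * ((z t) ^ 2 - zε ^ 2) ≤ deriv v t)
    (hz₁ : z t₁ = zε) (hz₂ : z t₂ = zε)
    (hvbound : (r₂ / lam) * (v t₂ - v t₁) ≤ 2 * zε ^ 3) :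
    ∀ t ∈ Set.Icc t₁ t₂,
      (z t) ^ 3 / 3 - zε ^ 2 * z t + 2 * zε ^ 3 / 3 ≤ zε ^ 3 ∧
      z t ≤ (2 * Real.cos (Real.pi / 9)) * zε := by
  have hc : 0 < r₂ / lam := div_pos hr₂ hlam
  set c : ℝ := r₂ / lam with hcdef
  -- I(t) = z³/3 − zε² z + 2zε³/3
  set I : ℝ → ℝ := fun t => (z t) ^ 3 / 3 - zε ^ 2 * z t + 2 * zε ^ 3 / 3 with hI
  have hIdiff : Differentiable ℝ I := by
    apply Differentiable.add
    · exact ((hz.pow 3).div_const 3).sub ((differentiable_const _).mul hz)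
    · exact differentiable_const _
  have hIderiv : ∀ t, deriv I t = ((z t) ^ 2 - zε ^ 2) * deriv z t := by
    intro t
    have h1 : HasDerivAt z (deriv z t) t := (hz t).hasDerivAt
    have h2 : HasDerivAt I (((z t) ^ 2 - zε ^ 2) * deriv z t) t := by
      have := (((h1.pow 3).div_const 3).sub ((hasDerivAt_const t (zε^2)).mul h1)).add
        (hasDerivAt_const t (2 * zε ^ 3 / 3))
      exact this.congr_deriv (by ring)
    exact h2.deriv
  -- key derivative bounds
  have hkey : ∀ t ∈ Set.Icc t₁ t₂, |deriv I t| ≤ c * deriv v t := by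
    intro t ht
    have hzz := hzge t ht
    have hnn : 0 ≤ (z t) ^ 2 - zε ^ 2 := by nlinarith [hzε.le]
    rw [hIderiv]
    rw [abs_mul, abs_of_nonneg hnn]
    calc ((z t) ^ 2 - zε ^ 2) * |deriv z t| ≤ ((z t) ^ 2 - zε ^ 2) * r₂ :=
          mul_le_mul_of_nonneg_left (hz' t ht) hnn
      _ = c * (lam * ((z t) ^ 2 - zε ^ 2)) := by
          rw [hcdef]; field_simp
      _ ≤ c * deriv v t := mul_le_mul_of_nonneg_left (hv' t ht) hc.le
  -- G(t) = c(v t − v t₁) − I t is monotone on Icc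
  have hmonoG : MonotoneOn (fun t => c * (v t - v t₁) - I t) (Set.Icc t₁ t₂) := by
    apply monotoneOn_of_deriv_nonneg (convex_Icc _ _)
    · exact (((hv.sub_const _).const_mul c).sub hIdiff).continuous.continuousOn
    · exact (((hv.sub_const _).const_mul c).sub hIdiff).differentiableOn
    · intro t ht
      rw [interior_Icc] at ht
      have ht' : t ∈ Set.Icc t₁ t₂ := Set.mem_Icc_of_Ioo ht
      have : deriv (fun t => c * (v t - v t₁) - I t) t = c * deriv v t - deriv I t := by
        rw [deriv_fun_sub (((hv.sub_const _).const_mul c) t) (hIdiff t)]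
        rw [deriv_const_mul _ ((hv.sub_const (v t₁)) t)]
        rw [deriv_fun_sub (hv t) (differentiableAt_const _), deriv_const, sub_zero]
      rw [this]
      have := hkey t ht'
      have := abs_le.mp this
      linarith [this.2]
  have hmonoH : MonotoneOn (fun t => I t + c * (v t - v t₂)) (Set.Icc t₁ t₂) := by
    apply monotoneOn_of_deriv_nonneg (convex_Icc _ _)
    · exact (hIdiff.add ((hv.sub_const _).const_mul c)).continuous.continuousOn
    · exact (hIdiff.add ((hv.sub_const _).const_mul c)).differentiableOn
    · intro t ht
      rw [interior_Icc] at ht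
      have ht' : t ∈ Set.Icc t₁ t₂ := Set.mem_Icc_of_Ioo ht
      have : deriv (fun t => I t + c * (v t - v t₂)) t = deriv I t + c * deriv v t := by
        rw [deriv_fun_add (hIdiff t) (((hv.sub_const _).const_mul c) t)]
        rw [deriv_const_mul _ ((hv.sub_const (v t₂)) t)]
        rw [deriv_fun_sub (hv t) (differentiableAt_const _), deriv_const, sub_zero]
      rw [this]
      have := abs_le.mp (hkey t ht')
      linarith [this.1]
  have hI₁ : I t₁ = 0 := by simp only [hI, hz₁]; ring
  have hI₂ : I t₂ = 0 := by simp only [hI, hz₂]; ring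
  intro t ht
  have ht₁ : t₁ ∈ Set.Icc t₁ t₂ := Set.left_mem_Icc.mpr h12.le
  have ht₂ : t₂ ∈ Set.Icc t₁ t₂ := Set.right_mem_Icc.mpr h12.le
  have hg := hmonoG ht₁ ht ht.1
  have hh := hmonoH ht ht₂ ht.2
  simp only [hI₁, hI₂] at hg hh
  -- hg : c*(v t₁ - v t₁) - 0 ≤ c*(v t - v t₁) - I t
  -- hh : I t + c*(v t - v t₂) ≤ 0 + c*(v t₂ - v t₂)
  have hIle : 2 * I t ≤ c * (v t₂ - v t₁) := by
    have h1 : I t ≤ c * (v t - v t₁) := by linarith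
    have h2 : I t ≤ c * (v t₂ - v t) := by nlinarith
    nlinarith
  have hmain : I t ≤ zε ^ 3 := by rw [hcdef] at hIle; linarith
  refine ⟨hmain, ?_⟩
  -- cubic root fact
  set C : ℝ := 2 * Real.cos (Real.pi / 9) with hC
  have hcos3 : Real.cos (3 * (Real.pi / 9)) = 1 / 2 := by
    rw [show (3:ℝ) * (Real.pi / 9) = Real.pi / 3 by ring, Real.cos_pi_div_three]
  have hcube : C ^ 3 - 3 * C - 1 = 0 := by
    have := Real.cos_three_mul (Real.pi / 9)
    rw [hcos3] at this
    simp only [hC]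
    nlinarith [this]
  have hClb : Real.cos (Real.pi / 6) < Real.cos (Real.pi / 9) := by
    apply Real.cos_lt_cos_of_nonneg_of_le_pi
    · positivity
    · linarith [Real.pi_pos]
    · linarith [Real.pi_pos]
  rw [Real.cos_pi_div_six] at hClb
  have hC2 : 3 < C ^ 2 := by
    have h3 : Real.sqrt 3 ^ 2 = 3 := Real.sq_sqrt (by norm_num)
    have : Real.sqrt 3 < C := by
      simp only [hC]
      nlinarith [Real.sqrt_nonneg 3]
    nlinarith [Real.sqrt_nonneg 3]
  have hCpos : 0 < C := by nlinarith [Real.sqrt_nonneg 3]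
  clear_value C
  clear hC hcos3 hClb
  -- now z t ≤ C * zε
  have hzz := hzge t ht
  have hw : (z t) ^ 3 - 3 * zε ^ 2 * z t - zε ^ 3 ≤ 0 := by
    simp only [hI] at hmain; linarith
  by_contra hcon
  push_neg at hcon
  have hzpos : 0 < z t := lt_of_lt_of_le hzε hzz
  have hfac : 0 < (z t - C * zε) * ((z t) ^ 2 + C * zε * z t + (C ^ 2 - 3) * zε ^ 2) := by
    apply mul_pos (by linarith)
    have h1 : 0 < C * zε * z t := by positivity
    nlinarith [sq_nonneg (z t)]
  have hcz : (C ^ 3 - 3 * C - 1) * zε ^ 3 = 0 := by rw [hcube]; ring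
  nlinarith [hfac, hcz, hw]
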